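/- For all positive integers n, k, every partition α with at most k parts each at most n, and every i with 1 ≤ i ≤ n, the multiset of leg lengths l_T(x) over cells x of T with arm length a_T(x) = i−1 equals the multiset of leg lengths l_{T*}(x) over cells x of T* with arm length a_{T*}(x) = i−1. -/

import Mathlib

/-- The skew diagram with rows `a,…,b`, where row `i` contains the cells
`(i,j)` for `lo i ≤ j ≤ hi i`. -/
def skewD (a b : ℕ) (lo hi : ℕ → ℕ) : Finset (ℕ × ℕ) :=
  (Finset.Icc a b).biUnion fun i => (Finset.Icc (lo i) (hi i)).image fun j => (i, j)

/-- Arm length: number of cells of `G` in the same row, strictly to the right. -/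
def arm (G : Finset (ℕ × ℕ)) (x : ℕ × ℕ) : ℕ :=
  (G.filter fun y => y.1 = x.1 ∧ x.2 < y.2).card

/-- Leg length: number of cells of `G` in the same column, strictly below
(rows are numbered bottom to top). -/
def leg (G : Finset (ℕ × ℕ)) (x : ℕ × ℕ) : ℕ :=
  (G.filter fun y => y.2 = x.2 ∧ y.1 < x.1).card

/-- Multiset of arm–leg pairs of the cells of `E`, computed in `G`. -/
def AL (G E : Finset (ℕ × ℕ)) : Multiset (ℕ × ℕ) :=
  E.val.map fun x => (arm G x, leg G x)

/-- Multiset of hook lengths of `G`. -/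
def hookMS (G : Finset (ℕ × ℕ)) : Multiset ℕ :=
  G.val.map fun x => arm G x + leg G x + 1

/-- The skew diagram `T`. -/
def TT (n k : ℕ) (α : ℕ → ℕ) : Finset (ℕ × ℕ) :=
  skewD 1 k (fun i => α 1 - α i + 1) (fun i => n + α 1 - α i)

/-- The skew diagram `V`. -/
def VV (n k : ℕ) (α : ℕ → ℕ) : Finset (ℕ × ℕ) :=
  skewD (k + 1) (2 * k) (fun i => n + α 1 - α (i - k) + 1) (fun _ => n + α 1)

/-- The skew diagram `SQ = T ∪ V`. -/
def SQ (n k : ℕ) (α : ℕ → ℕ) : Finset (ℕ × ℕ) :=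
  TT n k α ∪ VV n k α

/-- The `k × n` rectangle `R`. -/
def RR (n k : ℕ) : Finset (ℕ × ℕ) :=
  skewD 1 k (fun _ => 1) (fun _ => n)

/-- The Young diagram `D` of `α`. -/
def DD (k : ℕ) (α : ℕ → ℕ) : Finset (ℕ × ℕ) :=
  skewD 1 k (fun _ => 1) (fun i => α (k + 1 - i))

/-- The 180° rotation `T*` of `T`. -/
def Tstar (n k : ℕ) (α : ℕ → ℕ) : Finset (ℕ × ℕ) :=
  skewD 1 k (fun i => α (k + 1 - i) - α k + 1) (fun i => n + α (k + 1 - i) - α k)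


open Finset

lemma mem_skewD' {a b : ℕ} {lo hi : ℕ → ℕ} {x : ℕ × ℕ} :
    x ∈ skewD a b lo hi ↔ a ≤ x.1 ∧ x.1 ≤ b ∧ lo x.1 ≤ x.2 ∧ x.2 ≤ hi x.1 := by
  simp only [skewD, Finset.mem_biUnion, Finset.mem_image, Finset.mem_Icc]
  constructor
  · rintro ⟨i, ⟨h1, h2⟩, j, ⟨h3, h4⟩, rfl⟩
    exact ⟨h1, h2, h3, h4⟩
  · rintro ⟨h1, h2, h3, h4⟩
    exact ⟨x.1, ⟨h1, h2⟩, x.2, ⟨h3, h4⟩, rfl⟩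

lemma arm_skewD' {a b : ℕ} {lo hi : ℕ → ℕ} {x : ℕ × ℕ} (hx : x ∈ skewD a b lo hi) :
    arm (skewD a b lo hi) x = hi x.1 - x.2 := by
  obtain ⟨h1, h2, h3, h4⟩ := mem_skewD'.1 hx
  have hset : (skewD a b lo hi).filter (fun y => y.1 = x.1 ∧ x.2 < y.2)
      = (Finset.Icc (x.2 + 1) (hi x.1)).image (fun j => (x.1, j)) := by
    ext y
    simp only [Finset.mem_filter, mem_skewD', Finset.mem_image, Finset.mem_Icc]
    constructor
    · rintro ⟨⟨g1, g2, g3, g4⟩, e1, e2⟩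
      exact ⟨y.2, ⟨by omega, by rw [← e1]; exact g4⟩, by rw [← e1]⟩
    · rintro ⟨j, ⟨hj1, hj2⟩, rfl⟩
      exact ⟨⟨h1, h2, show lo x.1 ≤ j by omega, hj2⟩, rfl, by omega⟩
  rw [arm, hset, Finset.card_image_of_injective _ (fun u v h => by
    simpa using congrArg Prod.snd h), Nat.card_Icc]
  omega

lemma leg_skewD' {a b : ℕ} {lo hi : ℕ → ℕ} (x : ℕ × ℕ) :
    leg (skewD a b lo hi) x
      = ((Finset.Icc a b).filter fun r => r < x.1 ∧ lo r ≤ x.2 ∧ x.2 ≤ hi r).card := by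
  have hset : (skewD a b lo hi).filter (fun y => y.2 = x.2 ∧ y.1 < x.1)
      = ((Finset.Icc a b).filter fun r => r < x.1 ∧ lo r ≤ x.2 ∧ x.2 ≤ hi r).image
          (fun r => (r, x.2)) := by
    ext y
    simp only [Finset.mem_filter, mem_skewD', Finset.mem_image, Finset.mem_Icc]
    constructor
    · rintro ⟨⟨g1, g2, g3, g4⟩, e1, e2⟩
      exact ⟨y.1, ⟨⟨g1, g2⟩, e2, by rw [← e1]; exact g3, by rw [← e1]; exact g4⟩,
        by rw [← e1]⟩
    · rintro ⟨r, ⟨⟨hr1, hr2⟩, hr3, hr4, hr5⟩, rfl⟩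
      exact ⟨⟨hr1, hr2, hr4, hr5⟩, rfl, hr3⟩
  rw [leg, hset, Finset.card_image_of_injective _ (fun u v h => by
    simpa using congrArg Prod.fst h)]

lemma tail_count (a : ℕ) (s : Multiset ℕ) :
    (s.filter (fun x => a ≤ x)).card = s.count a + (s.filter (fun x => a + 1 ≤ x)).card := by
  induction s using Multiset.induction with
  | empty => simp
  | cons x s ih =>
    rw [Multiset.filter_cons, Multiset.filter_cons, Multiset.count_cons]
    by_cases h1 : a ≤ x
    · by_cases h2 : a + 1 ≤ x
      · have hne : ¬ (a = x) := by omega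
        simp [h1, h2, hne, ih]
        omega
      · have heq : x = a := by omega
        subst heq
        simp [h1, h2, ih]
        omega
    · have h2 : ¬ (a + 1 ≤ x) := by omega
      have hne : ¬ (a = x) := by omega
      simp [h1, h2, hne, ih]

lemma multiset_eq_of_tails (s t : Multiset ℕ)
    (h : ∀ m, (s.filter (fun x => m ≤ x)).card = (t.filter (fun x => m ≤ x)).card) :
    s = t := by
  ext a
  have h1 := tail_count a s
  have h2 := tail_count a t
  have h3 := h a
  have h4 := h (a + 1)
  omega

lemma core_count (k c : ℕ) (α : ℕ → ℕ)
    (hmono : ∀ i j, 1 ≤ i → i ≤ j → j ≤ k → α j ≤ α i) :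
    ((Finset.Icc 1 k).val.map fun r =>
        ((Finset.Icc 1 k).filter fun r' => r' < r ∧ α r' ≤ α r + c).card)
  = ((Finset.Icc 1 k).val.map fun s =>
        ((Finset.Icc 1 k).filter fun s' => s < s' ∧ α s ≤ α s' + c).card) := by
  apply multiset_eq_of_tails
  intro m
  rw [Multiset.filter_map, Multiset.filter_map, Multiset.card_map, Multiset.card_map]
  rcases Nat.eq_zero_or_pos m with hm | hm
  · subst hm
    simp
  -- characterize tails
  have hf : ∀ r, 1 ≤ r → r ≤ k →
      (m ≤ ((Finset.Icc 1 k).filter fun r' => r' < r ∧ α r' ≤ α r + c).card ↔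
        (m < r ∧ α (r - m) ≤ α r + c)) := by
    intro r hr1 hrk
    constructor
    · intro hcard
      by_contra hcon
      push_neg at hcon
      have hsub : ((Finset.Icc 1 k).filter fun r' => r' < r ∧ α r' ≤ α r + c) ⊆
          Finset.Icc (r - m + 1) (r - 1) := by
        intro r' hr'
        simp only [Finset.mem_filter, Finset.mem_Icc] at hr' ⊢
        obtain ⟨⟨g1, g2⟩, g3, g4⟩ := hr'
        refine ⟨?_, by omega⟩
        by_cases hmr : m < r
        · have hml := hcon hmr
          by_contra hle
          have : α (r - m) ≤ α r' := hmono r' (r - m) g1 (by omega) (by omega)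
          omega
        · omega
      have hle := Finset.card_le_card hsub
      rw [Nat.card_Icc] at hle
      omega
    · rintro ⟨hmr, hle⟩
      have hsub : Finset.Icc (r - m) (r - 1) ⊆
          ((Finset.Icc 1 k).filter fun r' => r' < r ∧ α r' ≤ α r + c) := by
        intro r' hr'
        simp only [Finset.mem_filter, Finset.mem_Icc] at hr' ⊢
        obtain ⟨g1, g2⟩ := hr'
        refine ⟨⟨by omega, by omega⟩, by omega, ?_⟩
        have : α r' ≤ α (r - m) := hmono (r - m) r' (by omega) g1 (by omega)
        omega
      have hge := Finset.card_le_card hsub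
      rw [Nat.card_Icc] at hge
      omega
  have hg : ∀ s, 1 ≤ s → s ≤ k →
      (m ≤ ((Finset.Icc 1 k).filter fun s' => s < s' ∧ α s ≤ α s' + c).card ↔
        (s + m ≤ k ∧ α s ≤ α (s + m) + c)) := by
    intro s hs1 hsk
    constructor
    · intro hcard
      by_contra hcon
      push_neg at hcon
      have hsub : ((Finset.Icc 1 k).filter fun s' => s < s' ∧ α s ≤ α s' + c) ⊆
          Finset.Icc (s + 1) (min k (s + m - 1)) := by
        intro s' hs'
        simp only [Finset.mem_filter, Finset.mem_Icc] at hs' ⊢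
        obtain ⟨⟨g1, g2⟩, g3, g4⟩ := hs'
        refine ⟨by omega, ?_⟩
        by_cases hsm : s + m ≤ k
        · have hml := hcon hsm
          have hs'lt : s' < s + m := by
            by_contra hge
            have : α s' ≤ α (s + m) := hmono (s + m) s' (by omega) (by omega) g2
            omega
          omega
        · omega
      have hle := Finset.card_le_card hsub
      rw [Nat.card_Icc] at hle
      omega
    · rintro ⟨hsm, hle⟩
      have hsub : Finset.Icc (s + 1) (s + m) ⊆
          ((Finset.Icc 1 k).filter fun s' => s < s' ∧ α s ≤ α s' + c) := by
        intro s' hs'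
        simp only [Finset.mem_filter, Finset.mem_Icc] at hs' ⊢
        obtain ⟨g1, g2⟩ := hs'
        refine ⟨⟨by omega, by omega⟩, by omega, ?_⟩
        have : α (s + m) ≤ α s' := hmono s' (s + m) (by omega) g2 hsm
        omega
      have hge := Finset.card_le_card hsub
      rw [Nat.card_Icc] at hge
      omega
  have e1 : (Multiset.filter ((fun x => m ≤ x) ∘ fun r =>
        ((Finset.Icc 1 k).filter fun r' => r' < r ∧ α r' ≤ α r + c).card)
        (Finset.Icc 1 k).val).card
      = ((Finset.Icc 1 k).filter fun r => m < r ∧ α (r - m) ≤ α r + c).card := by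
    show ((Finset.Icc 1 k).filter _).card = _
    congr 1
    apply Finset.filter_congr
    intro r hr
    rw [Finset.mem_Icc] at hr
    exact hf r hr.1 hr.2
  have e2 : (Multiset.filter ((fun x => m ≤ x) ∘ fun s =>
        ((Finset.Icc 1 k).filter fun s' => s < s' ∧ α s ≤ α s' + c).card)
        (Finset.Icc 1 k).val).card
      = ((Finset.Icc 1 k).filter fun s => s + m ≤ k ∧ α s ≤ α (s + m) + c).card := by
    show ((Finset.Icc 1 k).filter _).card = _
    congr 1
    apply Finset.filter_congr
    intro s hs
    rw [Finset.mem_Icc] at hs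
    exact hg s hs.1 hs.2
  rw [e1, e2]
  have himg : ((Finset.Icc 1 k).filter fun r => m < r ∧ α (r - m) ≤ α r + c)
      = ((Finset.Icc 1 k).filter fun s => s + m ≤ k ∧ α s ≤ α (s + m) + c).image
          (fun s => s + m) := by
    ext r
    simp only [Finset.mem_filter, Finset.mem_Icc, Finset.mem_image]
    constructor
    · rintro ⟨⟨h1, h2⟩, h3, h4⟩
      refine ⟨r - m, ⟨⟨by omega, by omega⟩, by omega, ?_⟩, by omega⟩
      have e : r - m + m = r := by omega
      rw [e]
      exact h4
    · rintro ⟨s, ⟨⟨h1, h2⟩, h3, h4⟩, rfl⟩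
      refine ⟨⟨by omega, by omega⟩, by omega, ?_⟩
      have e : s + m - m = s := by omega
      rw [e]
      exact h4
  rw [himg, Finset.card_image_of_injective _ (add_left_injective m)]

/-- For each `i`, the multiset of leg lengths of the cells of `T` with arm
length `i−1` equals the multiset of leg lengths of the cells of `T*` with arm
length `i−1`. -/
theorem legs_T_eq_legs_Tstar (n k : ℕ) (α : ℕ → ℕ) (hn : 0 < n) (hk : 0 < k)
    (hα1 : α 1 ≤ n) (hmono : ∀ i j, 1 ≤ i → i ≤ j → j ≤ k → α j ≤ α i)
    (i : ℕ) (hi1 : 1 ≤ i) (hin : i ≤ n) :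
    (((TT n k α).filter fun x => arm (TT n k α) x = i - 1).val.map
      fun x => leg (TT n k α) x) =
    (((Tstar n k α).filter fun x => arm (Tstar n k α) x = i - 1).val.map
      fun x => leg (Tstar n k α) x) := by
  
  classical
  set eT : ℕ ↪ ℕ × ℕ :=
    ⟨fun r => (r, n + α 1 - α r - (i - 1)), fun a b h => congrArg Prod.fst h⟩ with heT
  set eS : ℕ ↪ ℕ × ℕ :=
    ⟨fun r => (r, n + α (k + 1 - r) - α k - (i - 1)), fun a b h => congrArg Prod.fst h⟩ with heS
  -- filtered set of T
  have hfT : (TT n k α).filter (fun x => arm (TT n k α) x = i - 1)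
      = Finset.map eT (Finset.Icc 1 k) := by
    ext x
    simp only [Finset.mem_filter, Finset.mem_map, Finset.mem_Icc, heT,
      Function.Embedding.coeFn_mk]
    constructor
    · rintro ⟨hx, harm⟩
      rw [TT] at hx harm
      obtain ⟨h1, h2, h3, h4⟩ := mem_skewD'.1 hx
      rw [arm_skewD' hx] at harm
      have h3' : α 1 - α x.1 + 1 ≤ x.2 := h3
      have h4' : x.2 ≤ n + α 1 - α x.1 := h4
      have harm' : (n + α 1 - α x.1) - x.2 = i - 1 := harm
      have hα : α x.1 ≤ α 1 := hmono 1 x.1 le_rfl h1 h2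
      refine ⟨x.1, ⟨h1, h2⟩, ?_⟩
      rw [Prod.ext_iff]
      exact ⟨rfl, by show n + α 1 - α x.1 - (i - 1) = x.2; omega⟩
    · rintro ⟨r, ⟨hr1, hr2⟩, rfl⟩
      have hα : α r ≤ α 1 := hmono 1 r le_rfl hr1 hr2
      have hx : ((r, n + α 1 - α r - (i - 1)) : ℕ × ℕ) ∈
          skewD 1 k (fun i => α 1 - α i + 1) (fun i => n + α 1 - α i) := by
        apply mem_skewD'.2
        refine ⟨hr1, hr2, ?_, ?_⟩
        · show α 1 - α r + 1 ≤ n + α 1 - α r - (i - 1)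
          omega
        · show n + α 1 - α r - (i - 1) ≤ n + α 1 - α r
          omega
      constructor
      · rw [TT]; exact hx
      · show arm (TT n k α) (r, n + α 1 - α r - (i - 1)) = i - 1; rw [TT, arm_skewD' hx]
        show (n + α 1 - α r) - (n + α 1 - α r - (i - 1)) = i - 1
        omega
  -- filtered set of Tstar
  have hfS : (Tstar n k α).filter (fun x => arm (Tstar n k α) x = i - 1)
      = Finset.map eS (Finset.Icc 1 k) := by
    ext x
    simp only [Finset.mem_filter, Finset.mem_map, Finset.mem_Icc, heS,
      Function.Embedding.coeFn_mk]
    constructor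
    · rintro ⟨hx, harm⟩
      rw [Tstar] at hx harm
      obtain ⟨h1, h2, h3, h4⟩ := mem_skewD'.1 hx
      rw [arm_skewD' hx] at harm
      have h3' : α (k + 1 - x.1) - α k + 1 ≤ x.2 := h3
      have h4' : x.2 ≤ n + α (k + 1 - x.1) - α k := h4
      have harm' : (n + α (k + 1 - x.1) - α k) - x.2 = i - 1 := harm
      have hαk : α k ≤ α (k + 1 - x.1) := hmono (k + 1 - x.1) k (by omega) (by omega) le_rfl
      have hα1' : α (k + 1 - x.1) ≤ α 1 := hmono 1 (k + 1 - x.1) le_rfl (by omega) (by omega)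
      refine ⟨x.1, ⟨h1, h2⟩, ?_⟩
      rw [Prod.ext_iff]
      exact ⟨rfl, by show n + α (k + 1 - x.1) - α k - (i - 1) = x.2; omega⟩
    · rintro ⟨r, ⟨hr1, hr2⟩, rfl⟩
      have hαk : α k ≤ α (k + 1 - r) := hmono (k + 1 - r) k (by omega) (by omega) le_rfl
      have hα1' : α (k + 1 - r) ≤ α 1 := hmono 1 (k + 1 - r) le_rfl (by omega) (by omega)
      have hx : ((r, n + α (k + 1 - r) - α k - (i - 1)) : ℕ × ℕ) ∈
          skewD 1 k (fun i => α (k + 1 - i) - α k + 1) (fun i => n + α (k + 1 - i) - α k) := by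
        apply mem_skewD'.2
        refine ⟨hr1, hr2, ?_, ?_⟩
        · show α (k + 1 - r) - α k + 1 ≤ n + α (k + 1 - r) - α k - (i - 1)
          omega
        · show n + α (k + 1 - r) - α k - (i - 1) ≤ n + α (k + 1 - r) - α k
          omega
      constructor
      · rw [Tstar]; exact hx
      · show arm (Tstar n k α) (r, n + α (k + 1 - r) - α k - (i - 1)) = i - 1; rw [Tstar, arm_skewD' hx]
        show (n + α (k + 1 - r) - α k) - (n + α (k + 1 - r) - α k - (i - 1)) = i - 1
        omega
  -- legs in T
  have hlegT : ∀ r ∈ Finset.Icc 1 k,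
      leg (TT n k α) (r, n + α 1 - α r - (i - 1))
        = ((Finset.Icc 1 k).filter fun r' => r' < r ∧ α r' ≤ α r + (i - 1)).card := by
    intro r hr
    rw [Finset.mem_Icc] at hr
    have hα : α r ≤ α 1 := hmono 1 r le_rfl hr.1 hr.2
    rw [TT, leg_skewD']
    congr 1
    apply Finset.filter_congr
    intro r' hr'
    rw [Finset.mem_Icc] at hr'
    have hα' : α r' ≤ α 1 := hmono 1 r' le_rfl hr'.1 hr'.2
    show (r' < r ∧ α 1 - α r' + 1 ≤ n + α 1 - α r - (i - 1) ∧
        n + α 1 - α r - (i - 1) ≤ n + α 1 - α r') ↔ (r' < r ∧ α r' ≤ α r + (i - 1))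
    constructor
    · rintro ⟨g1, g2, g3⟩
      exact ⟨g1, by omega⟩
    · rintro ⟨g1, g2⟩
      have : α r ≤ α r' := hmono r' r hr'.1 (Nat.le_of_lt g1) hr.2
      exact ⟨g1, by omega, by omega⟩
  -- legs in Tstar
  have hlegS : ∀ r ∈ Finset.Icc 1 k,
      leg (Tstar n k α) (r, n + α (k + 1 - r) - α k - (i - 1))
        = ((Finset.Icc 1 k).filter fun r' =>
            r' < r ∧ α (k + 1 - r) ≤ α (k + 1 - r') + (i - 1)).card := by
    intro r hr
    rw [Finset.mem_Icc] at hr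
    have hαk : α k ≤ α (k + 1 - r) := hmono (k + 1 - r) k (by omega) (by omega) le_rfl
    have hα1' : α (k + 1 - r) ≤ α 1 := hmono 1 (k + 1 - r) le_rfl (by omega) (by omega)
    rw [Tstar, leg_skewD']
    congr 1
    apply Finset.filter_congr
    intro r' hr'
    rw [Finset.mem_Icc] at hr'
    have hαk' : α k ≤ α (k + 1 - r') := hmono (k + 1 - r') k (by omega) (by omega) le_rfl
    have hα1'' : α (k + 1 - r') ≤ α 1 := hmono 1 (k + 1 - r') le_rfl (by omega) (by omega)
    show (r' < r ∧ α (k + 1 - r') - α k + 1 ≤ n + α (k + 1 - r) - α k - (i - 1) ∧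
        n + α (k + 1 - r) - α k - (i - 1) ≤ n + α (k + 1 - r') - α k) ↔
        (r' < r ∧ α (k + 1 - r) ≤ α (k + 1 - r') + (i - 1))
    constructor
    · rintro ⟨g1, g2, g3⟩
      exact ⟨g1, by omega⟩
    · rintro ⟨g1, g2⟩
      have : α (k + 1 - r') ≤ α (k + 1 - r) :=
        hmono (k + 1 - r) (k + 1 - r') (by omega) (by omega) (by omega)
      exact ⟨g1, by omega, by omega⟩
  -- reindexing for Tstar
  have hre : ∀ r ∈ Finset.Icc 1 k,
      ((Finset.Icc 1 k).filter fun r' =>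
          r' < r ∧ α (k + 1 - r) ≤ α (k + 1 - r') + (i - 1)).card
    = ((Finset.Icc 1 k).filter fun s' =>
          k + 1 - r < s' ∧ α (k + 1 - r) ≤ α s' + (i - 1)).card := by
    intro r hr
    rw [Finset.mem_Icc] at hr
    have himg : ((Finset.Icc 1 k).filter fun s' =>
          k + 1 - r < s' ∧ α (k + 1 - r) ≤ α s' + (i - 1))
        = ((Finset.Icc 1 k).filter fun r' =>
            r' < r ∧ α (k + 1 - r) ≤ α (k + 1 - r') + (i - 1)).image
              (fun r' => k + 1 - r') := by
      ext s'
      simp only [Finset.mem_filter, Finset.mem_Icc, Finset.mem_image]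
      constructor
      · rintro ⟨⟨h1, h2⟩, h3, h4⟩
        refine ⟨k + 1 - s', ⟨⟨by omega, by omega⟩, by omega, ?_⟩, by omega⟩
        have e : k + 1 - (k + 1 - s') = s' := by omega
        rw [e]
        exact h4
      · rintro ⟨r', ⟨⟨h1, h2⟩, h3, h4⟩, rfl⟩
        exact ⟨⟨by omega, by omega⟩, by omega, h4⟩
    rw [himg, Finset.card_image_of_injOn]
    intro a ha b hb hab
    simp only [Finset.coe_filter, Set.mem_setOf_eq, Finset.mem_Icc] at ha hb
    have hab' : k + 1 - a = k + 1 - b := hab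
    omega
  -- the involution fixes Icc 1 k
  have hI : Finset.image (fun r => k + 1 - r) (Finset.Icc 1 k) = Finset.Icc 1 k := by
    ext s
    simp only [Finset.mem_image, Finset.mem_Icc]
    constructor
    · rintro ⟨r, ⟨h1, h2⟩, rfl⟩
      omega
    · intro hs
      exact ⟨k + 1 - s, ⟨by omega, by omega⟩, by omega⟩
  have hinv : Multiset.map (fun r => k + 1 - r) (Finset.Icc 1 k).val
      = (Finset.Icc 1 k).val := by
    rw [← Finset.image_val_of_injOn, hI]
    intro a ha b hb hab
    simp only [Finset.coe_Icc, Set.mem_Icc] at ha hb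
    have hab' : k + 1 - a = k + 1 - b := hab
    omega
  -- assemble
  have L1 : Multiset.map ((fun x => leg (TT n k α) x) ∘ ⇑eT) (Finset.Icc 1 k).val
      = Multiset.map (fun r =>
          ((Finset.Icc 1 k).filter fun r' => r' < r ∧ α r' ≤ α r + (i - 1)).card)
          (Finset.Icc 1 k).val := by
    apply Multiset.map_congr rfl
    intro r hr
    exact hlegT r hr
  have S1 : Multiset.map ((fun x => leg (Tstar n k α) x) ∘ ⇑eS) (Finset.Icc 1 k).val
      = Multiset.map (fun r =>
          ((Finset.Icc 1 k).filter fun s' =>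
            k + 1 - r < s' ∧ α (k + 1 - r) ≤ α s' + (i - 1)).card)
          (Finset.Icc 1 k).val := by
    apply Multiset.map_congr rfl
    intro r hr
    exact (hlegS r hr).trans (hre r hr)
  have S2 : Multiset.map (fun r =>
          ((Finset.Icc 1 k).filter fun s' =>
            k + 1 - r < s' ∧ α (k + 1 - r) ≤ α s' + (i - 1)).card)
          (Finset.Icc 1 k).val
      = Multiset.map (fun s =>
          ((Finset.Icc 1 k).filter fun s' => s < s' ∧ α s ≤ α s' + (i - 1)).card)
          (Finset.Icc 1 k).val := by
    conv_rhs => rw [← hinv, Multiset.map_map]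
    rfl
  rw [hfT, hfS, Finset.map_val, Finset.map_val, Multiset.map_map, Multiset.map_map,
    L1, S1, S2]
  exact core_count k (i - 1) α hmono
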